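/- Let M be a positively t-determined S-module. Then dim r^*M ≤ dim M (Krull dimension). -/

import Mathlib

open MvPolynomial

noncomputable def mono (K : Type) [Field K] {n : ℕ} (a : Fin n → ℕ) : MvPolynomial (Fin n) K :=
  monomial (Finsupp.equivFunOnFinite.symm a) 1

def rmap {n : ℕ} (t a : Fin n → ℕ) : Fin n → ℕ := fun i => if 0 < a i then t i else 0

def sqrtv {n : ℕ} (a : Fin n → ℕ) : Fin n → ℕ := fun i => if 0 < a i then 1 else 0

structure MultiGrading (K : Type) [Field K] (n : ℕ) (M : Type) [AddCommGroup M]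
    [Module (MvPolynomial (Fin n) K) M] [Module K M]
    [IsScalarTower K (MvPolynomial (Fin n) K) M] where
  g : (Fin n → ℕ) → Submodule K M
  internal : DirectSum.IsInternal g
  compat : ∀ a b : Fin n → ℕ, ∀ m ∈ g a, mono K b • m ∈ g (a + b)

variable {K : Type} [Field K] {n : ℕ}

def PosDetermined {M : Type} [AddCommGroup M] [Module (MvPolynomial (Fin n) K) M] [Module K M]
    [IsScalarTower K (MvPolynomial (Fin n) K) M] (G : MultiGrading K n M) (t : Fin n → ℕ) : Prop :=
  ∀ (a : Fin n → ℕ) (i : Fin n), t i ≤ a i →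
    Set.BijOn (fun m => (X i : MvPolynomial (Fin n) K) • m) (G.g a : Set M) (G.g (a + Pi.single i 1) : Set M)

def IsRStar {M N : Type} [AddCommGroup M] [Module (MvPolynomial (Fin n) K) M] [Module K M]
    [IsScalarTower K (MvPolynomial (Fin n) K) M]
    [AddCommGroup N] [Module (MvPolynomial (Fin n) K) N] [Module K N]
    [IsScalarTower K (MvPolynomial (Fin n) K) N]
    (t : Fin n → ℕ) (G : MultiGrading K n M) (H : MultiGrading K n N) : Prop :=
  ∃ e : (Fin n → ℕ) → (M →ₗ[K] N),
    (∀ a, Set.InjOn (e a) (G.g (rmap t a))) ∧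
    (∀ a, e a '' (G.g (rmap t a)) = (H.g a : Set N)) ∧
    (∀ a b : Fin n → ℕ, ∀ m ∈ G.g (rmap t a),
      e (a + b) (mono K (rmap t (a + b) - rmap t a) • m) = mono K b • e a m)

noncomputable def mdim (R : Type) [CommRing R] (M : Type) [AddCommGroup M] [Module R M] :
    WithBot ℕ∞ :=
  ringKrullDim (R ⧸ (⊤ : Submodule R M).annihilator)

-- auxiliary lemmas

lemma symm_add (u v : Fin n → ℕ) :
    Finsupp.equivFunOnFinite.symm (u + v) =
      Finsupp.equivFunOnFinite.symm u + Finsupp.equivFunOnFinite.symm v := by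
  ext i
  simp [Finsupp.coe_equivFunOnFinite_symm]

lemma mono_mul (u v : Fin n → ℕ) : mono K u * mono K v = mono K (u + v) := by
  simp only [mono, monomial_mul, one_mul, symm_add]

lemma mono_zero : mono K (0 : Fin n → ℕ) = 1 := by
  have : Finsupp.equivFunOnFinite.symm (0 : Fin n → ℕ) = 0 := by
    ext i; simp [Finsupp.coe_equivFunOnFinite_symm]
  rw [mono, this, monomial_zero']
  simp

lemma mono_coe (v : Fin n →₀ ℕ) : mono K (⇑v) = monomial v 1 := by
  rw [mono, Finsupp.equivFunOnFinite_symm_coe]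

lemma mono_single (i : Fin n) : mono K (Pi.single i 1) = X i := by
  rw [mono, Finsupp.equivFunOnFinite_symm_single, X]

section Aux

variable {M : Type} [AddCommGroup M] [Module (MvPolynomial (Fin n) K) M] [Module K M]
  [IsScalarTower K (MvPolynomial (Fin n) K) M]

lemma mono_smul_mono (u v : Fin n → ℕ) (m : M) :
    mono K u • (mono K v • m) = mono K (u + v) • m := by
  rw [← mul_smul, mono_mul]

lemma smul_decomp (f : MvPolynomial (Fin n) K) (m : M) :
    f • m = ∑ v ∈ f.support, coeff v f • (mono K (⇑v) • m) := by
  conv_lhs => rw [f.as_sum]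
  rw [Finset.sum_smul]
  refine Finset.sum_congr rfl fun v hv => ?_
  rw [mono_coe, ← smul_assoc]
  congr 1
  rw [MvPolynomial.smul_monomial, smul_eq_mul, mul_one]

/-- From `f • m = 0` for homogeneous `m`, each monomial of `f` kills `m`. -/
lemma mono_smul_eq_zero (G : MultiGrading K n M) {d : Fin n → ℕ}
    {m : M} (hm : m ∈ G.g d) {f : MvPolynomial (Fin n) K} (hf : f • m = 0)
    {v : Fin n →₀ ℕ} (hv : v ∈ f.support) : mono K (⇑v) • m = 0 := by
  classical
  have hindep := G.internal.submodule_iSupIndep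
  set T : (Fin n →₀ ℕ) → M := fun (w : Fin n →₀ ℕ) => coeff w f • (mono K (w : Fin n → ℕ) • m) with hT
  have hTmem : ∀ w : Fin n →₀ ℕ, T w ∈ G.g (d + ⇑w) := fun w =>
    Submodule.smul_mem _ _ (G.compat d (⇑w) m hm)
  have hsum : ∑ w ∈ f.support, T w = 0 := by rw [← smul_decomp f m]; exact hf
  have hTv : T v = -∑ w ∈ f.support.erase v, T w := by
    rw [eq_neg_iff_add_eq_zero, Finset.add_sum_erase _ T hv]
    exact hsum
  have hmem2 : T v ∈ ⨆ (j) (_ : j ≠ d + ⇑v), G.g j := by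
    rw [hTv]
    refine neg_mem (Submodule.sum_mem _ fun w hw => ?_)
    have hne : d + ⇑w ≠ d + ⇑v := by
      intro h
      have : (⇑w : Fin n → ℕ) = ⇑v := by
        funext i
        have := congrFun h i
        simpa using this
      exact (Finset.ne_of_mem_erase hw) (DFunLike.coe_injective this)
    exact Submodule.mem_iSup_of_mem (d + ⇑w) (Submodule.mem_iSup_of_mem hne (hTmem w))
  have hzero : T v = 0 :=
    (Submodule.disjoint_def.mp (hindep (d + ⇑v))) _ (hTmem v) hmem2
  have hc : coeff v f ≠ 0 := MvPolynomial.mem_support_iff.mp hv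
  have := (smul_eq_zero.mp hzero).resolve_left hc
  exact this

lemma xi_inj (G : MultiGrading K n M) {t : Fin n → ℕ} (hM : PosDetermined G t)
    {d : Fin n → ℕ} {i : Fin n} (hd : t i ≤ d i) {m : M} (hm : m ∈ G.g d)
    (h : (X i : MvPolynomial (Fin n) K) • m = 0) : m = 0 :=
  (hM d i hd).injOn hm (Submodule.zero_mem _) (by simpa using h)

lemma mono_inj (G : MultiGrading K n M) {t : Fin n → ℕ} (hM : PosDetermined G t) :
    ∀ (N : ℕ) (u d : Fin n → ℕ), (∑ i, u i = N) → (∀ i, 0 < u i → t i ≤ d i) →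
    ∀ m ∈ G.g d, mono K u • m = 0 → m = 0 := by
  intro N
  induction N with
  | zero =>
    intro u d hu _ m hm h
    have hu0 : u = 0 := by
      funext i
      have : u i = 0 := by
        by_contra hne
        have : 0 < ∑ j : Fin n, u j := Finset.sum_pos' (fun _ _ => Nat.zero_le _)
          ⟨i, Finset.mem_univ i, Nat.pos_of_ne_zero hne⟩
        omega
      exact this
    rw [hu0, mono_zero, one_smul] at h
    exact h
  | succ N ih =>
    intro u d hu hud m hm h
    have hex : ∃ i, 0 < u i := by
      by_contra hne
      push_neg at hne
      have : ∑ i, u i = 0 := Finset.sum_eq_zero fun i _ => Nat.le_zero.mp (hne i)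
      omega
    obtain ⟨i, hi⟩ := hex
    have hsplit : (u - Pi.single i 1) + Pi.single i 1 = u := by
      funext j
      by_cases hji : j = i
      · subst hji; simp; omega
      · simp [Pi.single_apply, hji]
    have h' : mono K (u - Pi.single i 1) • ((X i : MvPolynomial (Fin n) K) • m) = 0 := by
      rw [← mono_single, mono_smul_mono, hsplit]
      exact h
    have hXm : (X i : MvPolynomial (Fin n) K) • m ∈ G.g (d + Pi.single i 1) := by
      rw [← mono_single]
      exact G.compat d (Pi.single i 1) m hm
    have hsum' : ∑ j : Fin n, (u - Pi.single i 1 : Fin n → ℕ) j = N := by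
      have : (∑ j : Fin n, (u - Pi.single i 1 : Fin n → ℕ) j) + ∑ j : Fin n, (Pi.single i 1 : Fin n → ℕ) j = ∑ j : Fin n, u j := by
        rw [← Finset.sum_add_distrib]
        refine Finset.sum_congr rfl fun j _ => ?_
        have := congrFun hsplit j
        simpa using this
      have hps : ∑ j : Fin n, (Pi.single i 1 : Fin n → ℕ) j = 1 := by
        rw [Finset.sum_eq_single i]
        · simp
        · intro b _ hb; simp [Pi.single_apply, hb]
        · intro hb; exact absurd (Finset.mem_univ i) hb
      omega
    have hcond : ∀ j : Fin n, 0 < (u - Pi.single i 1 : Fin n → ℕ) j →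
        t j ≤ (d + Pi.single i 1 : Fin n → ℕ) j := by
      intro j hj
      have h1 : (u - Pi.single i 1 : Fin n → ℕ) j = u j - (Pi.single i 1 : Fin n → ℕ) j := rfl
      have h2 : (d + Pi.single i 1 : Fin n → ℕ) j = d j + (Pi.single i 1 : Fin n → ℕ) j := rfl
      have : 0 < u j := by rw [h1] at hj; omega
      have := hud j this
      omega
    have hXm0 : (X i : MvPolynomial (Fin n) K) • m = 0 :=
      ih (u - Pi.single i 1) (d + Pi.single i 1) hsum' hcond _ hXm h'
    exact xi_inj G hM (hud i hi) hm hXm0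

lemma key_shift (G : MultiGrading K n M) {t : Fin n → ℕ} (hM : PosDetermined G t)
    (ht : ∀ i, 1 ≤ t i) {a b : Fin n → ℕ} {m : M}
    (hm : m ∈ G.g (rmap t a)) (h : mono K b • m = 0) :
    mono K (rmap t (a + b) - rmap t a) • m = 0 := by
  set d := rmap t a with hd
  have hdi : ∀ i, d i = if 0 < a i then t i else 0 := fun _ => rfl
  have hdt : ∀ i, d i ≤ t i := fun i => by rw [hdi]; split <;> omega
  set c : Fin n → ℕ := fun i => min (b i) (t i - d i) with hc
  have hci : ∀ i, c i = min (b i) (t i - d i) := fun _ => rfl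
  have hcb : ∀ i, c i ≤ b i := fun i => by rw [hci]; exact min_le_left _ _
  have hc2 : ∀ i, c i < b i → d i + c i = t i := by
    intro i hlt
    have hch := min_choice (b i) (t i - d i)
    rw [← hci] at hch
    have := hdt i
    rcases hch with h1 | h1 <;> omega
  have hXc : mono K c • m ∈ G.g (d + c) := G.compat d c m hm
  have h2 : mono K (b - c) • (mono K c • m) = 0 := by
    rw [mono_smul_mono]
    have : (b - c) + c = b := by
      funext i
      have := hcb i
      show b i - c i + c i = b i
      omega
    rw [this]
    exact h
  have hm0 : mono K c • m = 0 := by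
    refine mono_inj G hM (∑ i, (b - c) i) (b - c) (d + c) rfl ?_ _ hXc h2
    intro i hi
    have hi' : c i < b i := by
      have : (b - c) i = b i - c i := rfl
      rw [this] at hi
      omega
    have := hc2 i hi'
    show t i ≤ d i + c i
    omega
  set D := rmap t (a + b) - d with hD
  have hDi : ∀ i, D i = (if 0 < a i + b i then t i else 0) - d i := fun _ => rfl
  have hcD : ∀ i, c i ≤ D i := by
    intro i
    rw [hDi, hci, hdi]
    by_cases ha : 0 < a i
    · have : 0 < a i + b i := by omega
      simp only [ha, this, if_true]
      omega
    · simp only [ha, if_false]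
      by_cases hb : 0 < b i
      · have : 0 < a i + b i := by omega
        simp only [this, if_true]
        omega
      · have : a i + b i = 0 := by omega
        omega
  have hDc : (D - c) + c = D := by
    funext i
    have := hcD i
    show D i - c i + c i = D i
    omega
  calc mono K D • m = mono K (D - c) • (mono K c • m) := by rw [mono_smul_mono, hDc]
    _ = 0 := by rw [hm0, smul_zero]

end Aux

noncomputable def mdepth (K : Type) [Field K] (n : ℕ) (M : Type) [AddCommGroup M] [Module (MvPolynomial (Fin n) K) M] : ℕ :=
  sSup {k : ℕ | ∃ rs : List (MvPolynomial (Fin n) K), rs.length = k ∧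
    (∀ r ∈ rs, r ∈ Ideal.span (Set.range (X : Fin n → MvPolynomial (Fin n) K))) ∧
    RingTheory.Sequence.IsRegular M rs}

noncomputable def IsCM (K : Type) [Field K] (n : ℕ) (M : Type) [AddCommGroup M] [Module (MvPolynomial (Fin n) K) M] : Prop :=
  (mdepth K n M : WithBot ℕ∞) = mdim (MvPolynomial (Fin n) K) M

/-- `dim r^*M ≤ dim M`. -/
theorem dim_rstar_le {M N : Type} [AddCommGroup M] [Module (MvPolynomial (Fin n) K) M]
    [Module K M] [IsScalarTower K (MvPolynomial (Fin n) K) M]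
    [AddCommGroup N] [Module (MvPolynomial (Fin n) K) N] [Module K N]
    [IsScalarTower K (MvPolynomial (Fin n) K) N]
    (t : Fin n → ℕ) (ht : ∀ i, 1 ≤ t i)
    (G : MultiGrading K n M) [Module.Finite (MvPolynomial (Fin n) K) M]
    (hM : PosDetermined G t)
    (H : MultiGrading K n N) (hN : IsRStar t G H) :
    mdim (MvPolynomial (Fin n) K) N ≤ mdim (MvPolynomial (Fin n) K) M := by
  classical
  obtain ⟨e, einj, esurj, erel⟩ := hN
  have hann : (⊤ : Submodule (MvPolynomial (Fin n) K) M).annihilator ≤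
      (⊤ : Submodule (MvPolynomial (Fin n) K) N).annihilator := by
    intro f hf
    rw [Submodule.mem_annihilator] at hf ⊢
    intro x _
    have hx : x ∈ ⨆ a, H.g a := by
      rw [H.internal.submodule_iSup_eq_top]; trivial
    refine Submodule.iSup_induction (motive := fun y => f • y = 0) H.g hx ?_ (smul_zero f) ?_
    · intro a x hxa
      obtain ⟨m, hm, rfl⟩ : ∃ m ∈ G.g (rmap t a), e a m = x := by
        have := esurj a
        have hx' : x ∈ e a '' (G.g (rmap t a)) := by rw [this]; exact hxa
        obtain ⟨m, hm, hme⟩ := hx'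
        exact ⟨m, hm, hme⟩
      rw [smul_decomp]
      refine Finset.sum_eq_zero fun v hv => ?_
      have hfm : f • m = 0 := hf m trivial
      have h1 : mono K (⇑v) • m = 0 := mono_smul_eq_zero G hm hfm hv
      have h2 : mono K (rmap t (a + ⇑v) - rmap t a) • m = 0 :=
        key_shift G hM ht hm h1
      have h3 : mono K (⇑v) • e a m = e (a + ⇑v) (mono K (rmap t (a + ⇑v) - rmap t a) • m) :=
        (erel a (⇑v) m hm).symm
      rw [h3, h2, map_zero, smul_zero]
    · intro x y hx hy
      rw [smul_add, hx, hy, add_zero]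
  unfold mdim
  exact ringKrullDim_le_of_surjective
    (Ideal.Quotient.factor hann)
    (fun y => by
      obtain ⟨r, rfl⟩ := Ideal.Quotient.mk_surjective y
      exact ⟨Ideal.Quotient.mk _ r, Ideal.Quotient.factor_mk hann r⟩)
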